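/- Let A be an n×n complex matrix and B a p×p complex matrix, each with all eigenvalues in the open unit disc, and let T be an n×p complex matrix. Then the series ∑_{k=0}^{∞} A^k T (Bᴴ)^k is summable, and its sum Ω is the unique n×p complex matrix satisfying the Stein equation Ω = A Ω Bᴴ + T. -/

import Mathlib

open Matrix Filter

attribute [local instance] Matrix.linftyOpNormedAddCommGroup Matrix.linftyOpNormedRing
  Matrix.linftyOpNormedAlgebra Matrix.linftyOpNormedSpace

lemma aux_pow_bound {m : ℕ} (M : Matrix (Fin m) (Fin m) ℂ)
    (hM : ∀ μ ∈ spectrum ℂ M, ‖μ‖ < 1) :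
    ∃ r : ℝ, 0 ≤ r ∧ r < 1 ∧ ∀ᶠ k in atTop, ‖M ^ k‖ ≤ r ^ k := by
  have hrad : spectralRadius ℂ M < 1 := by
    obtain hemp | hne := (spectrum ℂ M).eq_empty_or_nonempty
    · rw [spectralRadius, hemp]
      simp
    · obtain ⟨μ₀, hμ₀, hmax⟩ :=
        Set.exists_max_image (spectrum ℂ M) (fun μ => ‖μ‖) (Matrix.finite_spectrum M) hne
      refine lt_of_le_of_lt (iSup₂_le (a := (‖μ₀‖₊ : ENNReal)) fun μ hμ => ?_) ?_
      · exact ENNReal.coe_le_coe.mpr (by exact_mod_cast hmax μ hμ)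
      · exact_mod_cast hM μ₀ hμ₀
  obtain ⟨c, hc₁, hc₂⟩ := exists_between hrad
  have hct : c ≠ ⊤ := (hc₂.trans_le le_top).ne
  have hgel := spectrum.pow_nnnorm_pow_one_div_tendsto_nhds_spectralRadius M
  have hev : ∀ᶠ k : ℕ in atTop, (‖M ^ k‖₊ : ENNReal) ^ (1 / (k:ℝ)) < c :=
    hgel.eventually_lt_const hc₁
  refine ⟨c.toReal, ENNReal.toReal_nonneg, ?_, ?_⟩
  · have := ENNReal.toReal_lt_toReal hct ENNReal.one_ne_top |>.mpr hc₂
    simpa using this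
  · filter_upwards [hev, eventually_ge_atTop 1] with k hk hk1
    have hkne : (k:ℝ) ≠ 0 := by positivity
    have h2 : ((‖M ^ k‖₊ : ENNReal) ^ (1 / (k:ℝ))) ^ (k:ℕ) ≤ c ^ k :=
      pow_le_pow_left' hk.le k
    rw [← ENNReal.rpow_natCast ((‖M ^ k‖₊ : ENNReal) ^ (1 / (k:ℝ))) k,
      ← ENNReal.rpow_mul, one_div, inv_mul_cancel₀ hkne, ENNReal.rpow_one] at h2
    have h3 : ‖M ^ k‖₊ ≤ c.toReal ^ k := by
      have := ENNReal.toReal_mono (by simp [hct]) h2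
      simpa [ENNReal.toReal_pow] using this
    exact h3

/-- If all eigenvalues of `A` and of `B` lie in the open unit disc, the series
`∑ₖ Aᵏ T (Bᴴ)ᵏ` converges, and its sum `Ω` is the unique solution of the Stein
equation `Ω = A Ω Bᴴ + T`. -/
theorem stmt_2 {n p : ℕ}
    (A : Matrix (Fin n) (Fin n) ℂ) (B : Matrix (Fin p) (Fin p) ℂ)
    (T : Matrix (Fin n) (Fin p) ℂ)
    (hA : ∀ μ ∈ spectrum ℂ A, ‖μ‖ < 1)
    (hB : ∀ μ ∈ spectrum ℂ B, ‖μ‖ < 1) :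
    ∃ Ω : Matrix (Fin n) (Fin p) ℂ,
      HasSum (fun k : ℕ => A ^ k * T * Bᴴ ^ k) Ω ∧
      Ω = A * Ω * Bᴴ + T ∧
      ∀ Ω' : Matrix (Fin n) (Fin p) ℂ, Ω' = A * Ω' * Bᴴ + T → Ω' = Ω := by
  classical
  obtain ⟨r, hr0, hr1, hAev⟩ := aux_pow_bound A hA
  have hB' : ∀ μ ∈ spectrum ℂ Bᴴ, ‖μ‖ < 1 := by
    intro μ hμ
    rw [← Matrix.star_eq_conjTranspose, spectrum.map_star, Set.mem_star] at hμ
    simpa using hB _ hμ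
  obtain ⟨s, hs0, hs1, hBev⟩ := aux_pow_bound Bᴴ hB'
  have hrs1 : r * s < 1 := by nlinarith
  have hbound : ∀ᶠ k in Filter.atTop, ‖A ^ k * T * Bᴴ ^ k‖ ≤ ‖T‖ * (r * s) ^ k := by
    filter_upwards [hAev, hBev] with k h1 h2
    calc ‖A ^ k * T * Bᴴ ^ k‖ ≤ ‖A ^ k * T‖ * ‖Bᴴ ^ k‖ := Matrix.linfty_opNorm_mul _ _
      _ ≤ ‖A ^ k‖ * ‖T‖ * ‖Bᴴ ^ k‖ := by
          gcongr
          exact Matrix.linfty_opNorm_mul _ _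
      _ ≤ r ^ k * ‖T‖ * s ^ k :=
          mul_le_mul (mul_le_mul h1 le_rfl (norm_nonneg T) (pow_nonneg hr0 k)) h2
            (norm_nonneg _) (by positivity)
      _ = ‖T‖ * (r * s) ^ k := by rw [mul_pow]; ring
  have hg : Summable (fun k : ℕ => ‖T‖ * (r * s) ^ k) :=
    (summable_geometric_of_lt_one (by positivity) hrs1).mul_left _
  have hsum : Summable (fun k : ℕ => A ^ k * T * Bᴴ ^ k) :=
    Summable.of_norm_bounded_eventually_nat hg hbound
  set Ω := ∑' k : ℕ, A ^ k * T * Bᴴ ^ k with hΩdef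
  have hΩ : HasSum (fun k : ℕ => A ^ k * T * Bᴴ ^ k) Ω := hsum.hasSum
  let L : Matrix (Fin n) (Fin p) ℂ →ₗ[ℂ] Matrix (Fin n) (Fin p) ℂ :=
    { toFun := fun X => A * X * Bᴴ
      map_add' := fun X Y => by
        show A * (X + Y) * Bᴴ = A * X * Bᴴ + A * Y * Bᴴ
        rw [Matrix.mul_add, Matrix.add_mul]
      map_smul' := fun c X => by
        show A * (c • X) * Bᴴ = c • (A * X * Bᴴ)
        rw [Matrix.mul_smul, Matrix.smul_mul] }
  have hL : Continuous L := L.continuous_of_finiteDimensional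
  have h1 : HasSum (fun k : ℕ => A * (A ^ k * T * Bᴴ ^ k) * Bᴴ) (A * Ω * Bᴴ) := by
    simpa [Function.comp_def, L] using hΩ.map L.toAddMonoidHom hL
  have h2 : HasSum (fun k : ℕ => A ^ (k + 1) * T * Bᴴ ^ (k + 1)) (A * Ω * Bᴴ) := by
    convert h1 using 2 with k
    rw [pow_succ' A k, pow_succ Bᴴ k]
    simp only [Matrix.mul_assoc]
  have heq : Ω = A * Ω * Bᴴ + T := by
    have h3 := (hasSum_nat_add_iff (f := fun k : ℕ => A ^ k * T * Bᴴ ^ k) 1).mp h2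
    simp only [Finset.range_one, Finset.sum_singleton, pow_zero, Matrix.one_mul,
      Matrix.mul_one] at h3
    exact hΩ.unique h3
  refine ⟨Ω, hΩ, heq, ?_⟩
  intro Ω' hΩ'
  have hD : Ω' - Ω = A * (Ω' - Ω) * Bᴴ := by
    rw [Matrix.mul_sub, Matrix.sub_mul]
    conv_lhs => rw [hΩ', heq]
    abel
  have hDk : ∀ k : ℕ, Ω' - Ω = A ^ k * (Ω' - Ω) * Bᴴ ^ k := by
    intro k
    induction k with
    | zero => simp
    | succ k ih =>
      calc Ω' - Ω = A ^ k * (Ω' - Ω) * Bᴴ ^ k := ih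
        _ = A ^ k * (A * (Ω' - Ω) * Bᴴ) * Bᴴ ^ k := by rw [← hD]
        _ = A ^ (k + 1) * (Ω' - Ω) * Bᴴ ^ (k + 1) := by
            rw [pow_succ A k, pow_succ' Bᴴ k]
            simp only [Matrix.mul_assoc]
  have hnorm : ∀ᶠ k in Filter.atTop, ‖Ω' - Ω‖ ≤ ‖Ω' - Ω‖ * (r * s) ^ k := by
    filter_upwards [hAev, hBev] with k h1 h2
    calc ‖Ω' - Ω‖ = ‖A ^ k * (Ω' - Ω) * Bᴴ ^ k‖ := by rw [← hDk k]
      _ ≤ ‖A ^ k * (Ω' - Ω)‖ * ‖Bᴴ ^ k‖ := Matrix.linfty_opNorm_mul _ _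
      _ ≤ ‖A ^ k‖ * ‖Ω' - Ω‖ * ‖Bᴴ ^ k‖ := by
          gcongr
          exact Matrix.linfty_opNorm_mul _ _
      _ ≤ r ^ k * ‖Ω' - Ω‖ * s ^ k :=
          mul_le_mul (mul_le_mul h1 le_rfl (norm_nonneg _) (pow_nonneg hr0 k)) h2
            (norm_nonneg _) (by positivity)
      _ = ‖Ω' - Ω‖ * (r * s) ^ k := by rw [mul_pow]; ring
  have htend : Filter.Tendsto (fun k : ℕ => ‖Ω' - Ω‖ * (r * s) ^ k) Filter.atTop (nhds 0) := by
    simpa using (tendsto_pow_atTop_nhds_zero_of_lt_one (by positivity) hrs1).const_mul ‖Ω' - Ω‖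
  have hle : ‖Ω' - Ω‖ ≤ 0 := ge_of_tendsto htend hnorm
  have : Ω' - Ω = 0 := by
    rwa [← norm_le_zero_iff]
  exact sub_eq_zero.mp this
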